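/- For n ≥ 2, let x^k_1 ≤ x^k_2 be nonnegative reals for k = 1,…,n and t_{i1…in} = Σ_k x^k_{ik}. The n-th order interaction contrast c^(n)(t) = Σ (−1)^{n+Σik} h(t − t_{i1…in}) satisfies the recursion: its (n−1)-fold iterated tail integral c^[n](t,∞) equals −∫_{t−x^w_2}^{t−x^w_1} c^[n−1](τ,∞)dτ for any fixed coordinate w, and consequently c^[n](t,∞) ≤ 0 for all t if n is even and c^[n](t,∞) ≥ 0 for all t if n is odd. -/

import Mathlib

noncomputable def heaviside (x : ℝ) : ℝ := if 0 ≤ x then 1 else 0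

/-- The tail cumulative interaction contrast `c^[n+1](t,∞)` for the serial
architecture: `c^[1](t,∞) = c^(1)(t)` and
`c^[n](t,∞) = ∫_t^∞ c^[n−1](τ − x^w_1, ∞) dτ − ∫_t^∞ c^[n−1](τ − x^w_2, ∞) dτ`. -/
noncomputable def ctail (x : ℕ → Fin 2 → ℝ) : ℕ → ℝ → ℝ
  | 0, t => heaviside (t - x 0 0) - heaviside (t - x 0 1)
  | (n + 1), t =>
      (∫ τ in Set.Ioi t, ctail x n (τ - x (n + 1) 0)) -
      (∫ τ in Set.Ioi t, ctail x n (τ - x (n + 1) 1))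

open MeasureTheory intervalIntegral Set

lemma integral_Ioi_comp_sub (f : ℝ → ℝ) (t c : ℝ) :
    ∫ τ in Set.Ioi t, f (τ - c) = ∫ τ in Set.Ioi (t - c), f τ := by
  rw [← MeasureTheory.integral_indicator measurableSet_Ioi,
    ← MeasureTheory.integral_indicator measurableSet_Ioi,
    ← integral_sub_right_eq_self (Set.indicator (Set.Ioi (t - c)) f) c]
  congr 1
  funext τ
  by_cases h : t < τ
  · rw [Set.indicator_of_mem (by simpa using h), Set.indicator_of_mem (by simp [sub_lt_sub_iff_right, h])]
  · rw [Set.indicator_of_notMem (by simpa using h),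
      Set.indicator_of_notMem (by simp [Set.mem_Ioi, sub_lt_sub_iff_right]; simpa using h)]

lemma key (x : ℕ → Fin 2 → ℝ) (hx0 : ∀ k, 0 ≤ x k 0) (hx : ∀ k, x k 0 ≤ x k 1) :
    ∀ n : ℕ, Integrable (ctail x n) ∧ (∀ t, t < 0 → ctail x n t = 0) ∧
      (∀ t, (∑ k ∈ Finset.range (n + 1), x k 1) < t → ctail x n t = 0) ∧
      (∀ t, 0 ≤ (-1 : ℝ) ^ n * ctail x n t) ∧
      (∀ t, ctail x (n + 1) t = -(∫ τ in (t - x (n+1) 1)..(t - x (n+1) 0), ctail x n τ)) := by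
  intro n
  induction n with
  | zero =>
    have hab : x 0 0 ≤ x 0 1 := hx 0
    have h0 : ctail x 0 = Set.indicator (Set.Ico (x 0 0) (x 0 1)) (fun _ => (1 : ℝ)) := by
      funext t
      show heaviside (t - x 0 0) - heaviside (t - x 0 1) = _
      unfold heaviside
      rcases lt_or_ge t (x 0 0) with h1 | h1
      · rw [Set.indicator_of_notMem (by simp [Set.mem_Ico]; intro h; linarith),
          if_neg (by simp; linarith), if_neg (by simp; linarith)]
        ring
      · rcases lt_or_ge t (x 0 1) with h2 | h2
        · rw [Set.indicator_of_mem (Set.mem_Ico.mpr ⟨h1, h2⟩),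
            if_pos (by linarith), if_neg (by simp; linarith)]
          ring
        · rw [Set.indicator_of_notMem (by simp [Set.mem_Ico]; intro h; linarith),
            if_pos (by linarith), if_pos (by linarith)]
          ring
    have hInt : Integrable (ctail x 0) := by
      rw [h0]
      exact (integrable_indicator_iff measurableSet_Ico).2
        (integrableOn_const measure_Ico_lt_top.ne)
    refine ⟨hInt, ?_, ?_, ?_, ?_⟩
    · intro t ht
      rw [h0, Set.indicator_of_notMem]
      simp only [Set.mem_Ico, not_and_or, not_le]
      left; linarith [hx0 0]
    · intro t ht
      simp only [zero_add, Finset.sum_range_one] at ht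
      rw [h0, Set.indicator_of_notMem]
      simp only [Set.mem_Ico, not_and_or, not_lt]
      right; linarith
    · intro t
      rw [h0]
      simp only [pow_zero, one_mul]
      exact Set.indicator_nonneg (fun _ _ => zero_le_one) t
    · intro t
      show (∫ τ in Set.Ioi t, ctail x 0 (τ - x 1 0)) - (∫ τ in Set.Ioi t, ctail x 0 (τ - x 1 1)) = _
      rw [integral_Ioi_comp_sub, integral_Ioi_comp_sub]
      have e1 := integral_Iic_add_Ioi (b := t - x 1 0) hInt.integrableOn hInt.integrableOn
      have e2 := integral_Iic_add_Ioi (b := t - x 1 1) hInt.integrableOn hInt.integrableOn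
      have e3 := integral_Iic_sub_Iic (μ := volume) (f := ctail x 0)
        (a := t - x 1 0) (b := t - x 1 1) hInt.integrableOn hInt.integrableOn
      rw [intervalIntegral.integral_symm]
      linarith
  | succ n ih =>
    obtain ⟨hInt, hneg, hpos, hsgn, hform⟩ := ih
    set a := x (n + 1) 0 with ha_def
    set b := x (n + 1) 1 with hb_def
    have hab : a ≤ b := hx (n + 1)
    have ha0 : 0 ≤ a := hx0 (n + 1)
    -- continuity of ctail x (n+1)
    have hrw : ctail x (n + 1) = fun t =>
        (∫ τ in (0:ℝ)..(t - b), ctail x n τ) - ∫ τ in (0:ℝ)..(t - a), ctail x n τ := by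
      funext t
      rw [hform t, intervalIntegral.integral_interval_sub_left hInt.intervalIntegrable
        hInt.intervalIntegrable, ← intervalIntegral.integral_symm]
    have hcont : Continuous (ctail x (n + 1)) := by
      rw [hrw]
      have hF := hInt.continuous_primitive 0
      exact (hF.comp (continuous_id.sub continuous_const)).sub
        (hF.comp (continuous_id.sub continuous_const))
    have hzero : ∀ t, t < 0 ∨ (∑ k ∈ Finset.range (n + 2), x k 1) < t → ctail x (n + 1) t = 0 := by
      intro t ht
      rw [hform t, neg_eq_zero]
      have htb : t - b ≤ t - a := by linarith
      have hE : Set.EqOn (ctail x n) (fun _ => (0:ℝ)) (Set.uIcc (t - b) (t - a)) := by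
        intro τ hτ
        rw [Set.uIcc_of_le htb, Set.mem_Icc] at hτ
        rcases ht with ht | ht
        · exact hneg τ (by linarith [hτ.2])
        · apply hpos τ
          rw [Finset.sum_range_succ] at ht
          have hbb : b = x (n + 1) 1 := rfl
          linarith [hτ.1]
      rw [intervalIntegral.integral_congr hE]
      simp
    have hsgn' : ∀ t, 0 ≤ (-1 : ℝ) ^ (n + 1) * ctail x (n + 1) t := by
      intro t
      rw [hform t]
      have htb : t - b ≤ t - a := by linarith
      have h1 : (0:ℝ) ≤ ∫ τ in (t - b)..(t - a), (-1 : ℝ) ^ n * ctail x n τ :=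
        intervalIntegral.integral_nonneg htb (fun τ _ => hsgn τ)
      rw [intervalIntegral.integral_const_mul] at h1
      rcases Nat.even_or_odd n with he | ho
      · rw [he.neg_one_pow] at h1
        rw [he.add_one.neg_one_pow]
        nlinarith
      · rw [ho.neg_one_pow] at h1
        rw [ho.add_one.neg_one_pow]
        nlinarith
    have hIntS : Integrable (ctail x (n + 1)) := by
      apply hcont.integrable_of_hasCompactSupport
      apply HasCompactSupport.intro (isCompact_Icc (a := (0:ℝ))
        (b := ∑ k ∈ Finset.range (n + 2), x k 1))
      intro t ht
      simp only [Set.mem_Icc, not_and_or, not_le] at ht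
      exact hzero t (by tauto)
    refine ⟨hIntS, fun t ht => hzero t (Or.inl ht), fun t ht => hzero t (Or.inr ht), hsgn', ?_⟩
    · intro t
      show (∫ τ in Set.Ioi t, ctail x (n+1) (τ - x (n+2) 0)) -
        (∫ τ in Set.Ioi t, ctail x (n+1) (τ - x (n+2) 1)) = _
      rw [integral_Ioi_comp_sub, integral_Ioi_comp_sub]
      have e1 := integral_Iic_add_Ioi (b := t - x (n+2) 0) hIntS.integrableOn hIntS.integrableOn
      have e2 := integral_Iic_add_Ioi (b := t - x (n+2) 1) hIntS.integrableOn hIntS.integrableOn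
      have e3 := integral_Iic_sub_Iic (μ := volume) (f := ctail x (n+1))
        (a := t - x (n+2) 0) (b := t - x (n+2) 1) hIntS.integrableOn hIntS.integrableOn
      rw [intervalIntegral.integral_symm]
      linarith

theorem stmt16 (x : ℕ → Fin 2 → ℝ)
    (hx0 : ∀ k, 0 ≤ x k 0) (hx : ∀ k, x k 0 ≤ x k 1) :
    ∀ m : ℕ, 1 ≤ m →
      (∀ t, ctail x m t = -(∫ τ in (t - x m 1)..(t - x m 0), ctail x (m - 1) τ)) ∧
      (Even (m + 1) → ∀ t, ctail x m t ≤ 0) ∧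
      (Odd (m + 1) → ∀ t, 0 ≤ ctail x m t) := by
  intro m hm
  obtain ⟨n, rfl⟩ : ∃ n, m = n + 1 := ⟨m - 1, (Nat.succ_pred_eq_of_pos hm).symm⟩
  obtain ⟨hInt, hneg, hpos, hsgn, hform⟩ := key x hx0 hx n
  obtain ⟨_, _, _, hsgn', _⟩ := key x hx0 hx (n + 1)
  refine ⟨by simpa using hform, ?_, ?_⟩
  · intro he t
    have h := hsgn' t
    have hodd : Odd (n + 1) := by
      have h1 : ¬ Even (n + 1) := (Nat.even_add_one.mp he)
      exact Nat.not_even_iff_odd.mp h1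
    rw [hodd.neg_one_pow] at h
    linarith
  · intro ho t
    have h := hsgn' t
    have heven : Even (n + 1) := by
      have h1 : ¬ Even (n + 1 + 1) := Nat.not_even_iff_odd.mpr ho
      rw [Nat.even_add_one, not_not] at h1
      exact h1
    rw [heven.neg_one_pow, one_mul] at h
    exact h
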